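/- For positive semidefinite matrices A, B ∈ ℝ^{n×n}, the Hadamard product satisfies λ_max(A ∘ B) ≤ (max_i A_{ii}) λ_max(B) and λ_min(A ∘ B) ≥ (min_i A_{ii}) λ_min(B). -/

import Mathlib

open Matrix
open scoped MatrixOrder

/-- μ is an eigenvalue of the square matrix M. -/
def HasEigen {n : ℕ} (M : Matrix (Fin n) (Fin n) ℝ) (μ : ℝ) : Prop :=
  ∃ v : Fin n → ℝ, v ≠ 0 ∧ M.mulVec v = μ • v

lemma dp_self_nonneg {n : ℕ} (v : Fin n → ℝ) : 0 ≤ v ⬝ᵥ v :=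
  Finset.sum_nonneg fun _ _ => mul_self_nonneg _

lemma dp_self_pos {n : ℕ} {v : Fin n → ℝ} (hv : v ≠ 0) : 0 < v ⬝ᵥ v :=
  lt_of_le_of_ne (dp_self_nonneg v) (fun h => hv (dotProduct_self_eq_zero.mp h.symm))

lemma herm_smul_one_sub {n : ℕ} {M : Matrix (Fin n) (Fin n) ℝ} (hM : M.IsHermitian) (c : ℝ) :
    (c • (1 : Matrix (Fin n) (Fin n) ℝ) - M).IsHermitian := by
  have ht : Mᵀ = M := by rw [← Matrix.conjTranspose_eq_transpose_of_trivial]; exact hM.eq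
  simp [Matrix.IsHermitian, Matrix.conjTranspose_sub, Matrix.conjTranspose_smul, hM.eq, ht]

lemma herm_sub_smul_one {n : ℕ} {M : Matrix (Fin n) (Fin n) ℝ} (hM : M.IsHermitian) (c : ℝ) :
    (M - c • (1 : Matrix (Fin n) (Fin n) ℝ)).IsHermitian := by
  have ht : Mᵀ = M := by rw [← Matrix.conjTranspose_eq_transpose_of_trivial]; exact hM.eq
  simp [Matrix.IsHermitian, Matrix.conjTranspose_sub, Matrix.conjTranspose_smul, hM.eq, ht]

/-- Every Mathlib eigenvalue of a real symmetric matrix is an eigenvalue in the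
`HasEigen` sense. -/
lemma hasEigen_of_isHermitian {n : ℕ} {M : Matrix (Fin n) (Fin n) ℝ}
    (hM : M.IsHermitian) (i : Fin n) : HasEigen M (hM.eigenvalues i) := by
  refine ⟨hM.eigenvectorBasis i, ?_, hM.mulVec_eigenvectorBasis i⟩
  exact fun h => hM.eigenvectorBasis.orthonormal.ne_zero i (by simpa using congrArg (WithLp.toLp 2) h)

/-- Rayleigh-type upper bound from bound on eigenvalues. -/
lemma rayleigh_le {n : ℕ} {M : Matrix (Fin n) (Fin n) ℝ} (hM : M.IsHermitian)
    (c : ℝ) (hc : ∀ μ, HasEigen M μ → μ ≤ c) (x : Fin n → ℝ) :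
    x ⬝ᵥ M.mulVec x ≤ c * (x ⬝ᵥ x) := by
  have hH := herm_smul_one_sub hM c
  have hpsd : (c • (1 : Matrix (Fin n) (Fin n) ℝ) - M).PosSemidef := by
    apply hH.posSemidef_iff_eigenvalues_nonneg.mpr
    intro i
    show 0 ≤ hH.eigenvalues i
    obtain ⟨v, hv, hmv⟩ := hasEigen_of_isHermitian hH i
    set μ := hH.eigenvalues i
    rw [Matrix.sub_mulVec, Matrix.smul_mulVec, Matrix.one_mulVec] at hmv
    have hmv' : M.mulVec v = (c - μ) • v := by
      rw [sub_smul, ← hmv]; abel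
    have : c - μ ≤ c := hc _ ⟨v, hv, hmv'⟩
    linarith
  have h0 := hpsd.re_dotProduct_nonneg x
  simp only [RCLike.re_to_real, star_trivial] at h0
  rw [Matrix.sub_mulVec, Matrix.smul_mulVec, Matrix.one_mulVec,
    dotProduct_sub, dotProduct_smul, smul_eq_mul] at h0
  linarith

/-- Rayleigh-type lower bound from bound on eigenvalues. -/
lemma rayleigh_ge {n : ℕ} {M : Matrix (Fin n) (Fin n) ℝ} (hM : M.IsHermitian)
    (c : ℝ) (hc : ∀ μ, HasEigen M μ → c ≤ μ) (x : Fin n → ℝ) :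
    c * (x ⬝ᵥ x) ≤ x ⬝ᵥ M.mulVec x := by
  have hH := herm_sub_smul_one hM c
  have hpsd : (M - c • (1 : Matrix (Fin n) (Fin n) ℝ)).PosSemidef := by
    apply hH.posSemidef_iff_eigenvalues_nonneg.mpr
    intro i
    show 0 ≤ hH.eigenvalues i
    obtain ⟨v, hv, hmv⟩ := hasEigen_of_isHermitian hH i
    set μ := hH.eigenvalues i
    rw [Matrix.sub_mulVec, Matrix.smul_mulVec, Matrix.one_mulVec,
      sub_eq_iff_eq_add] at hmv
    have hmv' : M.mulVec v = (μ + c) • v := by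
      rw [hmv, add_smul]
    have : c ≤ μ + c := hc _ ⟨v, hv, hmv'⟩
    linarith
  have h0 := hpsd.re_dotProduct_nonneg x
  simp only [RCLike.re_to_real, star_trivial] at h0
  rw [Matrix.sub_mulVec, Matrix.smul_mulVec, Matrix.one_mulVec,
    dotProduct_sub, dotProduct_smul, smul_eq_mul] at h0
  linarith

lemma triple_comm {n : ℕ} (f : Fin n → Fin n → Fin n → ℝ) :
    ∑ i, ∑ j, ∑ k, f i j k = ∑ k, ∑ i, ∑ j, f i j k :=
  (Finset.sum_congr rfl fun _ _ => Finset.sum_comm).trans Finset.sum_comm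

theorem stmt10 {n : ℕ} (A B : Matrix (Fin n) (Fin n) ℝ)
    (hA : A.PosSemidef) (hB : B.PosSemidef)
    (lB : ℝ) (hlB : HasEigen B lB ∧ ∀ μ, HasEigen B μ → μ ≤ lB)
    (sB : ℝ) (hsB : HasEigen B sB ∧ ∀ μ, HasEigen B μ → sB ≤ μ)
    (dmax : ℝ) (hdmax : (∀ i, A i i ≤ dmax) ∧ ∃ i, A i i = dmax)
    (dmin : ℝ) (hdmin : (∀ i, dmin ≤ A i i) ∧ ∃ i, A i i = dmin) :
    ∀ μ : ℝ, HasEigen (Matrix.hadamard A B) μ → μ ≤ dmax * lB ∧ dmin * sB ≤ μ := by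
  intro μ ⟨v, hv, hmv⟩
  -- square root of A
  set S := CFC.sqrt A with hS
  have hSsym : ∀ i j, S i j = S j i := by
    intro i j
    have h2 := congrFun (congrFun (CFC.sqrt_nonneg A).posSemidef.1 i) j
    rw [← hS] at h2
    simpa [Matrix.conjTranspose_apply] using h2.symm
  have hAS : ∀ i j, A i j = ∑ k, S k i * S k j := by
    intro i j
    have h2 := congrFun (congrFun (CFC.sqrt_mul_sqrt_self A hA.nonneg) i) j
    rw [← hS, Matrix.mul_apply] at h2
    rw [← h2]
    exact Finset.sum_congr rfl fun k _ => by rw [hSsym i k]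
  -- the vectors w k
  set w : Fin n → Fin n → ℝ := fun k i => S k i * v i with hw
  -- key identities
  have L : v ⬝ᵥ (Matrix.hadamard A B).mulVec v
      = ∑ i, ∑ j, ∑ k, (S k i * v i) * B i j * (S k j * v j) := by
    simp only [dotProduct, Matrix.mulVec, dotProduct, Matrix.hadamard_apply]
    refine Finset.sum_congr rfl fun i _ => ?_
    rw [Finset.mul_sum]
    refine Finset.sum_congr rfl fun j _ => ?_
    rw [hAS i j, Finset.sum_mul, Finset.sum_mul, Finset.mul_sum]
    exact Finset.sum_congr rfl fun k _ => by ring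
  have R : ∑ k, (w k) ⬝ᵥ B.mulVec (w k)
      = ∑ k, ∑ i, ∑ j, (S k i * v i) * B i j * (S k j * v j) := by
    refine Finset.sum_congr rfl fun k _ => ?_
    simp only [dotProduct, Matrix.mulVec, dotProduct, hw]
    refine Finset.sum_congr rfl fun i _ => ?_
    rw [Finset.mul_sum]
    exact Finset.sum_congr rfl fun j _ => by ring
  have key : v ⬝ᵥ (Matrix.hadamard A B).mulVec v = ∑ k, (w k) ⬝ᵥ B.mulVec (w k) := by
    rw [L, R, triple_comm]
  have keyw : ∑ k, (w k) ⬝ᵥ (w k) = ∑ i, A i i * (v i) ^ 2 := by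
    simp only [dotProduct, hw]
    rw [Finset.sum_comm]
    refine Finset.sum_congr rfl fun i _ => ?_
    rw [hAS i i, Finset.sum_mul]
    exact Finset.sum_congr rfl fun k _ => by ring
  -- positivity facts
  have hlB0 : 0 ≤ lB := by
    obtain ⟨u, hu, hmu⟩ := hlB.1
    have h1 := hB.re_dotProduct_nonneg u
    simp only [RCLike.re_to_real, star_trivial] at h1
    rw [hmu, dotProduct_smul, smul_eq_mul] at h1
    nlinarith [dp_self_pos hu]
  have hsB0 : 0 ≤ sB := by
    obtain ⟨u, hu, hmu⟩ := hsB.1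
    have h1 := hB.re_dotProduct_nonneg u
    simp only [RCLike.re_to_real, star_trivial] at h1
    rw [hmu, dotProduct_smul, smul_eq_mul] at h1
    nlinarith [dp_self_pos hu]
  -- bounds on the full quadratic form
  have hup : v ⬝ᵥ (Matrix.hadamard A B).mulVec v ≤ dmax * lB * (v ⬝ᵥ v) := by
    calc v ⬝ᵥ (Matrix.hadamard A B).mulVec v = ∑ k, (w k) ⬝ᵥ B.mulVec (w k) := key
      _ ≤ ∑ k, lB * ((w k) ⬝ᵥ (w k)) :=
        Finset.sum_le_sum fun k _ => rayleigh_le hB.1 lB hlB.2 (w k)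
      _ = lB * ∑ i, A i i * (v i) ^ 2 := by rw [← Finset.mul_sum, keyw]
      _ ≤ lB * ∑ i, dmax * (v i) ^ 2 := by
        apply mul_le_mul_of_nonneg_left ?_ hlB0
        exact Finset.sum_le_sum fun i _ =>
          mul_le_mul_of_nonneg_right (hdmax.1 i) (sq_nonneg _)
      _ = dmax * lB * (v ⬝ᵥ v) := by
        simp only [dotProduct, Finset.mul_sum]
        exact Finset.sum_congr rfl fun i _ => by ring
  have hlo : dmin * sB * (v ⬝ᵥ v) ≤ v ⬝ᵥ (Matrix.hadamard A B).mulVec v := by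
    calc dmin * sB * (v ⬝ᵥ v) = sB * ∑ i, dmin * (v i) ^ 2 := by
          simp only [dotProduct, Finset.mul_sum]
          exact Finset.sum_congr rfl fun i _ => by ring
      _ ≤ sB * ∑ i, A i i * (v i) ^ 2 := by
        apply mul_le_mul_of_nonneg_left ?_ hsB0
        exact Finset.sum_le_sum fun i _ =>
          mul_le_mul_of_nonneg_right (hdmin.1 i) (sq_nonneg _)
      _ = ∑ k, sB * ((w k) ⬝ᵥ (w k)) := by rw [← Finset.mul_sum, keyw]
      _ ≤ ∑ k, (w k) ⬝ᵥ B.mulVec (w k) :=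
        Finset.sum_le_sum fun k _ => rayleigh_ge hB.1 sB hsB.2 (w k)
      _ = v ⬝ᵥ (Matrix.hadamard A B).mulVec v := key.symm
  have hvv : 0 < v ⬝ᵥ v := dp_self_pos hv
  have hq : v ⬝ᵥ (Matrix.hadamard A B).mulVec v = μ * (v ⬝ᵥ v) := by
    rw [hmv, dotProduct_smul, smul_eq_mul]
  rw [hq] at hup hlo
  exact ⟨le_of_mul_le_mul_right hup hvv, le_of_mul_le_mul_right hlo hvv⟩
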